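/- Contraction of ball-optimization iterates: let f : ℝ^d → ℝ be strictly convex with minimizer x*, and for x ∈ ℝ^d let O(x) be the minimizer of f over the Euclidean ball of radius r around x. If O(x) ≠ x*, then ‖O(x) − x*‖₂ ≤ √(‖x − x*‖₂² − r²); in particular ‖O(x) − x*‖₂ ≤ ‖x − x*‖₂ always. -/

import Mathlib

open scoped RealInnerProductSpace


/-- Contraction of ball-optimization iterates for a strictly convex function. -/
theorem stmt19 {d : ℕ} (f : EuclideanSpace ℝ (Fin d) → ℝ)
    (hconv : StrictConvexOn ℝ Set.univ f) (hcont : Continuous f)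
    (xstar : EuclideanSpace ℝ (Fin d)) (hmin : ∀ z, f xstar ≤ f z)
    (r : ℝ) (hr : 0 < r) (x z : EuclideanSpace ℝ (Fin d))
    (hz : z ∈ Metric.closedBall x r) (hzmin : ∀ w ∈ Metric.closedBall x r, f z ≤ f w) :
    (z ≠ xstar → ‖z - xstar‖ ≤ Real.sqrt (‖x - xstar‖ ^ 2 - r ^ 2)) ∧
      ‖z - xstar‖ ≤ ‖x - xstar‖ := by
  by_cases hzx : z = xstar
  · subst hzx
    refine ⟨fun h => absurd rfl h, ?_⟩
    simp [norm_nonneg]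
  -- notation
  set c : ℝ := (inner ℝ (z - x) (xstar - z) : ℝ) with hc_def
  set n : ℝ := ‖xstar - z‖ with hn_def
  have hn : 0 < n := by
    rw [hn_def, norm_pos_iff, sub_ne_zero]
    exact fun h => hzx h.symm
  have hA : ‖z - x‖ ≤ r := by
    rw [Metric.mem_closedBall] at hz
    rw [← dist_eq_norm]
    exact hz
  have hexp : ∀ t : ℝ, ‖(z - x) + t • (xstar - z)‖ ^ 2
      = ‖z - x‖ ^ 2 + 2 * t * c + t ^ 2 * n ^ 2 := by
    intro t
    rw [norm_add_sq_real, real_inner_smul_right, norm_smul, mul_pow,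
      Real.norm_eq_abs, sq_abs]
    ring
  -- for all small t, the point z + t•(xstar - z) is outside the ball
  have key2 : ∀ t : ℝ, 0 < t → t < 1 →
      r ^ 2 < ‖z - x‖ ^ 2 + 2 * t * c + t ^ 2 * n ^ 2 := by
    intro t ht ht1
    have hw : f (z + t • (xstar - z)) < f z := by
      have hconvex := hconv.2 (Set.mem_univ z) (Set.mem_univ xstar) hzx
        (show (0:ℝ) < 1 - t by linarith) ht (by ring)
      have heq : (1 - t) • z + t • xstar = z + t • (xstar - z) := by
        rw [smul_sub, sub_smul, one_smul]; abel
      rw [heq] at hconvex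
      calc f (z + t • (xstar - z)) < (1 - t) * f z + t * f xstar := hconvex
        _ ≤ (1 - t) * f z + t * f z := by nlinarith [hmin z]
        _ = f z := by ring
    have hout : z + t • (xstar - z) ∉ Metric.closedBall x r := by
      intro hmem
      exact absurd (hzmin _ hmem) (not_le.2 hw)
    have hgt : r < ‖(z - x) + t • (xstar - z)‖ := by
      rw [Metric.mem_closedBall, not_le, dist_eq_norm] at hout
      have : z + t • (xstar - z) - x = (z - x) + t • (xstar - z) := by abel
      rwa [this] at hout
    have := pow_lt_pow_left₀ hgt (le_of_lt hr) two_ne_zero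
    rwa [hexp t] at this
  -- obtuse angle: c ≥ 0
  have hc : 0 ≤ c := by
    by_contra hcneg
    push_neg at hcneg
    set t : ℝ := min (1/2) (-c / n ^ 2) with ht_def
    have htpos : 0 < t :=
      lt_min (by norm_num) (div_pos (by linarith) (by positivity))
    have ht1 : t < 1 := lt_of_le_of_lt (min_le_left _ _) (by norm_num)
    have h2 : t * n ^ 2 ≤ -c := by
      have h1 : t ≤ -c / n ^ 2 := min_le_right _ _
      rw [← le_div_iff₀ (by positivity)]
      exact h1
    have hk := key2 t htpos ht1
    have hAle : ‖z - x‖ ^ 2 ≤ r ^ 2 := by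
      nlinarith [norm_nonneg (z - x)]
    have h3 : t ^ 2 * n ^ 2 ≤ t * (-c) := by
      nlinarith [mul_le_mul_of_nonneg_left h2 htpos.le]
    have h4 : t * c < 0 := mul_neg_of_pos_of_neg htpos hcneg
    nlinarith [hk, hAle, h3, h4]
  -- boundary: r^2 ≤ ‖z - x‖^2
  have hA2 : r ^ 2 ≤ ‖z - x‖ ^ 2 := by
    by_contra hlt
    push_neg at hlt
    set δ : ℝ := r ^ 2 - ‖z - x‖ ^ 2 with hδ_def
    have hδ : 0 < δ := by rw [hδ_def]; linarith
    have hD : 0 < 2 * c + n ^ 2 + 1 := by positivity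
    set t : ℝ := min (1/2) (δ / (2 * c + n ^ 2 + 1)) with ht_def
    have htpos : 0 < t := lt_min (by norm_num) (by positivity)
    have ht1 : t < 1 := lt_of_le_of_lt (min_le_left _ _) (by norm_num)
    have h2 : t * (2 * c + n ^ 2 + 1) ≤ δ := by
      have h1 : t ≤ δ / (2 * c + n ^ 2 + 1) := min_le_right _ _
      rw [← le_div_iff₀ hD]
      exact h1
    have hk := key2 t htpos ht1
    have h3 : t ^ 2 * n ^ 2 ≤ t * n ^ 2 := by
      nlinarith [mul_nonneg (mul_nonneg htpos.le (sub_nonneg.2 ht1.le)) (sq_nonneg n)]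
    have h4 : t * (2 * c + n ^ 2 + 1) = 2 * t * c + t * n ^ 2 + t := by ring
    linarith [hk, h2, h3, h4, htpos]
  -- final computation
  have hfin : ‖x - xstar‖ ^ 2 = ‖z - x‖ ^ 2 + 2 * c + n ^ 2 := by
    have h : x - xstar = -((z - x) + (xstar - z)) := by abel
    rw [h, norm_neg, norm_add_sq_real]
  have hzn : ‖z - xstar‖ = n := norm_sub_rev z xstar
  have key : ‖z - xstar‖ ^ 2 ≤ ‖x - xstar‖ ^ 2 - r ^ 2 := by
    rw [hzn]; linarith
  constructor
  · intro _
    rw [show ‖z - xstar‖ = Real.sqrt (‖z - xstar‖ ^ 2) by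
      rw [Real.sqrt_sq (norm_nonneg _)]]
    exact Real.sqrt_le_sqrt key
  · nlinarith [norm_nonneg (z - xstar), norm_nonneg (x - xstar), sq_nonneg r]
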